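/- Let p > 1 be an integer and x^1, ..., x^m non-negative integers with tuple (x^1,...,x^m), and let y^1,...,y^m be non-negative integers with y^i ≤ x^i for all i and (y^1,...,y^m) ≠ (x^1,...,x^m). Let N = min over i of ord_p(x^i - y^i) (with ord_p(0) = ∞). Then ord_p((x^1 ⊕_p ⋯ ⊕_p x^m) - (y^1 ⊕_p ⋯ ⊕_p y^m)) ≥ N, with equality if and only if ord_p(∑_i (x^i - y^i)) = N. -/

import Mathlib

/-- The `L`-th digit of `x` in base `p`. -/
def digit (p L x : ℕ) : ℕ := x / p ^ L % p

/-- `p`-ary addition without carry of a finite family: the `L`-th `p`-ary digit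
is the sum of the `L`-th digits mod `p` (iterated `⊕_p`). -/
def oplusSum {ι : Type*} (p : ℕ) (s : Finset ι) (f : ι → ℕ) : ℕ :=
  ∑ L ∈ Finset.range (∑ i ∈ s, f i + 1), (∑ i ∈ s, digit p L (f i)) % p * p ^ L

/-- `p`-adic order of a natural number, with `ord 0 = ∞`. -/
noncomputable def ordE (p x : ℕ) : ℕ∞ := if x = 0 then ⊤ else (padicValNat p x : ℕ∞)

/-- `p`-adic order of an integer, with `ord 0 = ∞`. -/
noncomputable def ordZ (p : ℕ) (x : ℤ) : ℕ∞ := if x = 0 then ⊤ else (padicValInt p x : ℕ∞)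

lemma pval_dvd_iff {p : ℕ} (hp : 1 < p) {x k : ℕ} (hx : x ≠ 0) :
    p ^ k ∣ x ↔ k ≤ padicValNat p x := by
  rw [padicValNat_def' hp.ne' hx]
  exact (Nat.finiteMultiplicity_iff.2 ⟨hp.ne', Nat.pos_of_ne_zero hx⟩).pow_dvd_iff_le_multiplicity

lemma pvalZ_dvd_iff {p : ℕ} (hp : 1 < p) {z : ℤ} {k : ℕ} (hz : z ≠ 0) :
    (p : ℤ) ^ k ∣ z ↔ k ≤ padicValInt p z := by
  rw [padicValInt, ← pval_dvd_iff hp (Int.natAbs_ne_zero.2 hz), ← Int.natCast_dvd,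
    Nat.cast_pow]

lemma ordZ_ge {p : ℕ} (hp : 1 < p) (z : ℤ) (n : ℕ) (h : (p : ℤ) ^ n ∣ z) :
    (n : ℕ∞) ≤ ordZ p z := by
  unfold ordZ
  split_ifs with h0
  · exact le_top
  · exact_mod_cast Nat.cast_le.2 ((pvalZ_dvd_iff hp h0).1 h)

lemma ordZ_eq_iff {p : ℕ} (hp : 1 < p) (z : ℤ) (n : ℕ) (h : (p : ℤ) ^ n ∣ z) :
    ordZ p z = (n : ℕ∞) ↔ ¬ (p : ℤ) ^ (n + 1) ∣ z := by
  unfold ordZ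
  split_ifs with h0
  · subst h0
    simp
  · rw [Nat.cast_inj, pvalZ_dvd_iff hp h0]
    have := (pvalZ_dvd_iff hp h0).1 h
    omega

lemma ordE_eq_iff {p : ℕ} (hp : 1 < p) (x : ℕ) (n : ℕ) (h : p ^ n ∣ x) :
    ordE p x = (n : ℕ∞) ↔ ¬ p ^ (n + 1) ∣ x := by
  unfold ordE
  split_ifs with h0
  · subst h0
    simp
  · rw [Nat.cast_inj, pval_dvd_iff hp h0]
    have := (pval_dvd_iff hp h0).1 h
    omega

lemma digits_sum_lt {p : ℕ} (hp : 1 < p) (t : ℕ → ℕ) (ht : ∀ L, t L < p) (K : ℕ) :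
    ∑ L ∈ Finset.range K, t L * p ^ L < p ^ K := by
  induction K with
  | zero => simp
  | succ K ih =>
    rw [Finset.sum_range_succ, pow_succ]
    have h1 : (t K + 1) * p ^ K ≤ p * p ^ K := Nat.mul_le_mul_right _ (ht K)
    nlinarith [ih, h1]

lemma trunc_mod {p : ℕ} (hp : 1 < p) (t : ℕ → ℕ) (ht : ∀ L, t L < p)
    (M K : ℕ) (htz : ∀ L, M ≤ L → t L = 0) :
    (∑ L ∈ Finset.range M, t L * p ^ L) % p ^ K = ∑ L ∈ Finset.range K, t L * p ^ L := by
  set R := max M K with hR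
  have h1 : ∑ L ∈ Finset.range M, t L * p ^ L = ∑ L ∈ Finset.range R, t L * p ^ L := by
    refine Finset.sum_subset (Finset.range_subset_range.2 (le_max_left _ _)) ?_
    intro L _ hL
    rw [htz L (by simpa using hL)]
    ring
  have h2 : ∑ L ∈ Finset.range R, t L * p ^ L
      = ∑ L ∈ Finset.range K, t L * p ^ L + ∑ L ∈ Finset.Ico K R, t L * p ^ L := by
    rw [Finset.range_eq_Ico, Finset.range_eq_Ico,
      ← Finset.sum_Ico_consecutive _ (Nat.zero_le K) (show K ≤ R from le_max_right M K)]
  have h3 : p ^ K ∣ ∑ L ∈ Finset.Ico K R, t L * p ^ L := by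
    refine Finset.dvd_sum ?_
    intro L hL
    exact Dvd.dvd.mul_left (pow_dvd_pow p (Finset.mem_Ico.1 hL).1) _
  obtain ⟨c, hc⟩ := h3
  rw [h1, h2, hc, Nat.add_mul_mod_self_left,
    Nat.mod_eq_of_lt (digits_sum_lt hp t ht K)]

lemma oplusSum_mod {ι : Type*} {p : ℕ} (hp : 1 < p) (s : Finset ι) (f : ι → ℕ) (K : ℕ) :
    oplusSum p s f % p ^ K
      = ∑ L ∈ Finset.range K, (∑ i ∈ s, digit p L (f i)) % p * p ^ L := by
  refine trunc_mod hp _ (fun L => Nat.mod_lt _ (by omega)) _ _ ?_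
  intro L hL
  have hz : ∀ i ∈ s, digit p L (f i) = 0 := by
    intro i hi
    have h1 : f i ≤ ∑ j ∈ s, f j := Finset.single_le_sum (fun j _ => Nat.zero_le _) hi
    have h2 : L < p ^ L := Nat.lt_pow_self hp
    have h3 : f i < p ^ L := by omega
    simp [digit, Nat.div_eq_of_lt h3]
  rw [Finset.sum_eq_zero hz]
  simp

lemma digit_eq_mod_div (p L x : ℕ) : digit p L x = x % p ^ (L + 1) / p ^ L := by
  rw [digit, ← Nat.mod_mul_right_div_self, pow_succ]

lemma digit_congr {p : ℕ} {x y n : ℕ} (h : x % p ^ n = y % p ^ n) {L : ℕ} (hL : L < n) :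
    digit p L x = digit p L y := by
  have hd : p ^ (L + 1) ∣ p ^ n := pow_dvd_pow _ (by omega)
  rw [digit_eq_mod_div, digit_eq_mod_div, ← Nat.mod_mod_of_dvd x hd,
    ← Nat.mod_mod_of_dvd y hd, h]

lemma digit_oplusSum {ι : Type*} {p : ℕ} (hp : 1 < p) (s : Finset ι) (f : ι → ℕ) (L : ℕ) :
    digit p L (oplusSum p s f) = (∑ i ∈ s, digit p L (f i)) % p := by
  have hpow : 0 < p ^ L := Nat.pow_pos (by omega)
  rw [digit_eq_mod_div, oplusSum_mod hp, Finset.sum_range_succ,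
    Nat.add_mul_div_right _ _ hpow,
    Nat.div_eq_of_lt (digits_sum_lt hp _ (fun L => Nat.mod_lt _ (by omega)) L), zero_add]

lemma mod_pow_succ_eq (p L x : ℕ) :
    x % p ^ (L + 1) = p ^ L * digit p L x + x % p ^ L := by
  have hd : p ^ L ∣ p ^ (L + 1) := pow_dvd_pow _ (by omega)
  rw [digit_eq_mod_div, ← Nat.mod_mod_of_dvd x hd]
  exact (Nat.div_add_mod _ _).symm

theorem stmt1 (p m : ℕ) (hp : 1 < p) (xs ys : Fin m → ℕ)
    (hle : ∀ i, ys i ≤ xs i) (hne : xs ≠ ys)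
    (N : ℕ∞) (hN : N = ⨅ i, ordE p (xs i - ys i)) :
    N ≤ ordZ p ((oplusSum p Finset.univ xs : ℤ) - (oplusSum p Finset.univ ys : ℤ)) ∧
      (ordZ p ((oplusSum p Finset.univ xs : ℤ) - (oplusSum p Finset.univ ys : ℤ)) = N ↔
        ordE p (∑ i, (xs i - ys i)) = N) := by
  -- N is finite
  obtain ⟨j, hj⟩ : ∃ j, xs j ≠ ys j := by
    by_contra h
    push_neg at h
    exact hne (funext h)
  have hjpos : xs j - ys j ≠ 0 := by have := hle j; omega
  have hNne : N ≠ ⊤ := by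
    have h1 : N ≤ ordE p (xs j - ys j) := hN ▸ iInf_le _ j
    intro hT
    rw [hT, top_le_iff, ordE, if_neg hjpos] at h1
    exact (ENat.coe_ne_top _) h1
  lift N to ℕ using hNne with n hn
  -- divisibility of each difference
  have h1 : ∀ i, p ^ n ∣ xs i - ys i := by
    intro i
    have hi : (n : ℕ∞) ≤ ordE p (xs i - ys i) := hN ▸ iInf_le _ i
    by_cases h0 : xs i - ys i = 0
    · simp [h0]
    · rw [ordE, if_neg h0, Nat.cast_le] at hi
      exact (pval_dvd_iff hp h0).2 hi
  set d : Fin m → ℕ := fun i => (xs i - ys i) / p ^ n with hd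
  have hpow : 0 < p ^ n := Nat.pow_pos (by omega)
  have hxy : ∀ i, xs i = ys i + p ^ n * d i := by
    intro i
    simp only [hd]
    rw [mul_comm, Nat.div_mul_cancel (h1 i)]
    have := hle i
    omega
  have hrmod : ∀ i, xs i % p ^ n = ys i % p ^ n := by
    intro i
    rw [hxy i, Nat.add_mul_mod_self_left]
  set X := oplusSum p Finset.univ xs with hX
  set Y := oplusSum p Finset.univ ys with hY
  -- X ≡ Y mod p^n
  have hXYmod : X % p ^ n = Y % p ^ n := by
    rw [hX, hY, oplusSum_mod hp, oplusSum_mod hp]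
    refine Finset.sum_congr rfl ?_
    intro L hL
    have hLn : L < n := Finset.mem_range.1 hL
    congr 1
    congr 1
    exact Finset.sum_congr rfl fun i _ => digit_congr (hrmod i) hLn
  have hdvdZ : (p : ℤ) ^ n ∣ (X : ℤ) - Y := by
    refine ⟨(X / p ^ n : ℕ) - (Y / p ^ n : ℕ), ?_⟩
    have e1 := Nat.div_add_mod X (p ^ n)
    have e2 := Nat.div_add_mod Y (p ^ n)
    have e1' : ((p : ℤ) ^ n) * (X / p ^ n : ℕ) + (X % p ^ n : ℕ) = (X : ℤ) := by
      exact_mod_cast congrArg (Nat.cast : ℕ → ℤ) e1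
    have e2' : ((p : ℤ) ^ n) * (Y / p ^ n : ℕ) + (Y % p ^ n : ℕ) = (Y : ℤ) := by
      exact_mod_cast congrArg (Nat.cast : ℕ → ℤ) e2
    have e3 : ((X % p ^ n : ℕ) : ℤ) = ((Y % p ^ n : ℕ) : ℤ) := by exact_mod_cast hXYmod
    linear_combination e2' - e1' + e3
  constructor
  · exact ordZ_ge hp _ n hdvdZ
  -- the equality criterion
  set D : ℕ := ∑ i, d i with hD
  have hS : ∑ i, (xs i - ys i) = p ^ n * D := by
    rw [hD, Finset.mul_sum]
    refine Finset.sum_congr rfl ?_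
    intro i _
    have := hxy i
    have := hle i
    omega
  have hdvdN : p ^ n ∣ ∑ i, (xs i - ys i) := hS ▸ Dvd.intro _ rfl
  -- digit-level identity in ZMod p
  set dX := digit p n X with hdX
  set dY := digit p n Y with hdY
  have hdig : ∀ i : Fin m, xs i / p ^ n = ys i / p ^ n + d i := by
    intro i
    rw [hxy i, mul_comm, Nat.add_mul_div_right _ _ hpow]
  have hZmod : ((dX : ZMod p) - dY) = (D : ZMod p) := by
    have ha : (dX : ZMod p) = ∑ i, (digit p n (xs i) : ZMod p) := by
      rw [hdX, hX, digit_oplusSum hp, ZMod.natCast_mod, Nat.cast_sum]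
    have hb : (dY : ZMod p) = ∑ i, (digit p n (ys i) : ZMod p) := by
      rw [hdY, hY, digit_oplusSum hp, ZMod.natCast_mod, Nat.cast_sum]
    have hc : ∀ i : Fin m, (digit p n (xs i) : ZMod p)
        = (digit p n (ys i) : ZMod p) + (d i : ZMod p) := by
      intro i
      rw [digit, digit, hdig i, ZMod.natCast_mod, ZMod.natCast_mod]
      push_cast
      ring
    rw [ha, hb, Finset.sum_congr rfl (fun i _ => hc i), Finset.sum_add_distrib,
      hD, Nat.cast_sum]
    ring
  -- p^(n+1) ∣ X - Y ↔ p ∣ D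
  have hA : ((p : ℤ) ^ (n + 1) ∣ (X : ℤ) - Y) ↔ ((D : ZMod p) = 0) := by
    have split : ∀ z : ℕ, (z : ℤ) = (p : ℤ) ^ (n + 1) * (z / p ^ (n + 1) : ℕ)
        + ((p : ℤ) ^ n * (digit p n z : ℕ) + (z % p ^ n : ℕ)) := by
      intro z
      have f1 := Nat.div_add_mod z (p ^ (n + 1))
      have f2 := mod_pow_succ_eq p n z
      have f3 : z = p ^ (n + 1) * (z / p ^ (n + 1)) + (p ^ n * digit p n z + z % p ^ n) := by
        rw [← f2]
        exact f1.symm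
      exact_mod_cast congrArg (Nat.cast : ℕ → ℤ) f3
    have e3 : ((X % p ^ n : ℕ) : ℤ) = ((Y % p ^ n : ℕ) : ℤ) := by exact_mod_cast hXYmod
    have hsub : (X : ℤ) - Y = (p : ℤ) ^ (n + 1) * ((X / p ^ (n + 1) : ℕ) - (Y / p ^ (n + 1) : ℕ))
        + (p : ℤ) ^ n * ((dX : ℤ) - (dY : ℤ)) := by
      have s1 := split X
      have s2 := split Y
      rw [hdX, hdY] at *
      linear_combination s1 - s2 + e3
    rw [hsub, dvd_add_right (Dvd.intro _ rfl), pow_succ,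
      mul_dvd_mul_iff_left (a := (p : ℤ) ^ n) (by positivity),
      ← ZMod.intCast_zmod_eq_zero_iff_dvd]
    push_cast
    rw [hZmod]
  have hB : (p ^ (n + 1) ∣ ∑ i, (xs i - ys i)) ↔ ((D : ZMod p) = 0) := by
    rw [hS, pow_succ, mul_dvd_mul_iff_left hpow.ne',
      ← ZMod.natCast_eq_zero_iff]
  rw [ordZ_eq_iff hp _ n hdvdZ, ordE_eq_iff hp _ n hdvdN, hA, hB]
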